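/- Let E be a finite-dimensional real inner product space, X ⊆ E a nonempty convex set, N a norm on E with dual norm N*(y) = sup{⟨y, x⟩ : N(x) ≤ 1}, and ω : E → ℝ differentiable and strongly convex on X with modulus η > 0 with respect to N; let V be the associated Bregman distance. Let ζ_1, ..., ζ_S ∈ E, let v_1 ∈ X, and suppose for each s = 1, ..., S the point v_{s+1} ∈ X satisfies ⟨ζ_s, v_{s+1} − v_s⟩ + V(v_s, v_{s+1}) ≤ ⟨ζ_s, u − v_s⟩ + V(v_s, u) for all u ∈ X (i.e., v_{s+1} = P_{v_s}(ζ_s)). Then for every u ∈ X: Σ_{s=1}^S ⟨ζ_s, v_s − u⟩ ≤ V(v_1, u) + (1/(2η)) Σ_{s=1}^S N*(ζ_s)². -/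

import Mathlib

open scoped RealInnerProductSpace

private def ProxAuxSyn (E : Type*) : Type _ := E

private lemma proxAux_norm_le {E : Type*} [NormedAddCommGroup E] [InnerProductSpace ℝ E]
    [FiniteDimensional ℝ E] (N : E → ℝ)
    (hN_eq_zero : ∀ x, N x = 0 ↔ x = 0)
    (hN_smul : ∀ (c : ℝ) (x : E), N (c • x) = |c| * N x)
    (hN_add : ∀ x y, N (x + y) ≤ N x + N y)
    (hN_nonneg : ∀ x, 0 ≤ N x) :
    ∃ C : ℝ, 0 < C ∧ ∀ x : E, ‖x‖ ≤ C * N x := by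
  letI : AddCommGroup (ProxAuxSyn E) := inferInstanceAs (AddCommGroup E)
  letI : Module ℝ (ProxAuxSyn E) := inferInstanceAs (Module ℝ E)
  letI : NormedAddCommGroup (ProxAuxSyn E) := AddGroupNorm.toNormedAddCommGroup
    { toFun := N
      map_zero' := (hN_eq_zero 0).mpr rfl
      add_le' := hN_add
      neg' := fun (x : E) => by
        have h := hN_smul (-1) x
        rw [neg_smul, one_smul, abs_neg, abs_one, one_mul] at h
        exact h
      eq_zero_of_map_eq_zero' := fun x hx => (hN_eq_zero x).mp hx }
  letI : NormedSpace ℝ (ProxAuxSyn E) :=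
    { norm_smul_le := fun c x => le_of_eq (by
        show N (c • x) = ‖c‖ * N x
        rw [Real.norm_eq_abs]; exact hN_smul c x ) }
  letI : FiniteDimensional ℝ (ProxAuxSyn E) := inferInstanceAs (FiniteDimensional ℝ E)
  let f : (ProxAuxSyn E) →ₗ[ℝ] E :=
    { toFun := fun x => x, map_add' := fun _ _ => rfl, map_smul' := fun _ _ => rfl }
  let g := LinearMap.toContinuousLinearMap f
  refine ⟨‖g‖ + 1, by positivity, fun x => ?_⟩
  calc ‖x‖ = ‖g x‖ := rfl
  _ ≤ ‖g‖ * N x := g.le_opNorm x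
  _ ≤ (‖g‖ + 1) * N x := by nlinarith [hN_nonneg x, norm_nonneg g]

/-- Telescoping prox-mapping inequality (Lemma 6.1 of Nemirovski et al.): if each
`v (s+1)` is the prox point `P_{v s}(ζ s)` for `s = 0, ..., S-1` (indices shifted from the
paper's `1, ..., S`), then for every `u ∈ X`,
`Σ_{s<S} ⟨ζ s, v s - u⟩ ≤ V (v 0) u + (1/(2η)) Σ_{s<S} N*(ζ s)²`. -/
theorem prox_mapping_telescoping_inequality
    {E : Type*} [NormedAddCommGroup E] [InnerProductSpace ℝ E] [FiniteDimensional ℝ E]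
    (X : Set E) (hXne : X.Nonempty) (hXconv : Convex ℝ X)
    (N : E → ℝ)
    (hN_nonneg : ∀ x, 0 ≤ N x)
    (hN_eq_zero : ∀ x, N x = 0 ↔ x = 0)
    (hN_smul : ∀ (c : ℝ) (x : E), N (c • x) = |c| * N x)
    (hN_add : ∀ x y, N (x + y) ≤ N x + N y)
    (Nstar : E → ℝ)
    (hNstar : ∀ y, Nstar y = sSup ((fun x => ⟪y, x⟫) '' {x : E | N x ≤ 1}))
    (ω : E → ℝ) (hω : Differentiable ℝ ω)
    (η : ℝ) (hη : 0 < η)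
    (hstrong : ∀ x ∈ X, ∀ x' ∈ X,
      η * N (x' - x) ^ 2 ≤ ⟪gradient ω x' - gradient ω x, x' - x⟫)
    (V : E → E → ℝ)
    (hV : ∀ x u, V x u = ω u - ω x - ⟪gradient ω x, u - x⟫)
    (S : ℕ) (ζ : ℕ → E) (v : ℕ → E)
    (hv0 : v 0 ∈ X)
    (hvmem : ∀ s < S, v (s + 1) ∈ X)
    (hprox : ∀ s < S, ∀ u ∈ X,
      ⟪ζ s, v (s + 1) - v s⟫ + V (v s) (v (s + 1)) ≤ ⟪ζ s, u - v s⟫ + V (v s) u) :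
    ∀ u ∈ X,
      ∑ s ∈ Finset.range S, ⟪ζ s, v s - u⟫ ≤
        V (v 0) u + (1 / (2 * η)) * ∑ s ∈ Finset.range S, Nstar (ζ s) ^ 2 := by
  -- norm comparison constant
  obtain ⟨C, hC, hCle⟩ := proxAux_norm_le N hN_eq_zero hN_smul hN_add hN_nonneg
  -- duality: ⟪y, x⟫ ≤ Nstar y * N x
  have hdual : ∀ y x : E, ⟪y, x⟫ ≤ Nstar y * N x := by
    intro y x
    have hbdd : BddAbove ((fun x => ⟪y, x⟫) '' {x : E | N x ≤ 1}) := by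
      refine ⟨‖y‖ * C, ?_⟩
      rintro _ ⟨z, hz, rfl⟩
      calc ⟪y, z⟫ ≤ ‖y‖ * ‖z‖ := real_inner_le_norm y z
        _ ≤ ‖y‖ * (C * N z) := by
            exact mul_le_mul_of_nonneg_left (hCle z) (norm_nonneg y)
        _ ≤ ‖y‖ * (C * 1) := by
            have := hz
            have : C * N z ≤ C * 1 := mul_le_mul_of_nonneg_left hz hC.le
            exact mul_le_mul_of_nonneg_left this (norm_nonneg y)
        _ = ‖y‖ * C := by ring
    by_cases hx0 : x = 0
    · simp [hx0, (hN_eq_zero (0 : E)).mpr rfl]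
    · have hNx : 0 < N x := lt_of_le_of_ne (hN_nonneg x) (fun h => hx0 ((hN_eq_zero x).mp h.symm))
      have hz : N ((N x)⁻¹ • x) ≤ 1 := by
        rw [hN_smul, abs_of_pos (inv_pos.mpr hNx), inv_mul_cancel₀ hNx.ne']
      have hmem : ⟪y, (N x)⁻¹ • x⟫ ∈ (fun x => ⟪y, x⟫) '' {x : E | N x ≤ 1} :=
        ⟨(N x)⁻¹ • x, hz, rfl⟩
      have hle : ⟪y, (N x)⁻¹ • x⟫ ≤ Nstar y := by
        rw [hNstar y]; exact le_csSup hbdd hmem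
      have := mul_le_mul_of_nonneg_left hle hNx.le
      rw [real_inner_smul_right] at this
      calc ⟪y, x⟫ = N x * ((N x)⁻¹ * ⟪y, x⟫) := by
            field_simp
        _ ≤ N x * Nstar y := this
        _ = Nstar y * N x := by ring
  -- strong convexity lower bound on V
  have hVlb : ∀ x ∈ X, ∀ w ∈ X, η / 2 * N (w - x) ^ 2 ≤ V x w := by
    intro x hx w hw
    set d := w - x with hd
    have hline : ∀ t : ℝ, HasDerivAt (fun t : ℝ => x + t • d) d t := by
      intro t
      simpa using ((hasDerivAt_id t).smul_const d).const_add x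
    have hmemline : ∀ t ∈ Set.Icc (0 : ℝ) 1, x + t • d ∈ X := by
      intro t ht
      have := hXconv hx hw (by linarith [ht.2] : (0:ℝ) ≤ 1 - t) ht.1 (by ring)
      convert this using 1
      simp only [hd]
      module
    have hg : ∀ t : ℝ, HasDerivAt (fun t : ℝ => ω (x + t • d)) ⟪gradient ω (x + t • d), d⟫ t := by
      intro t
      have h1 : HasFDerivAt ω (InnerProductSpace.toDual ℝ E (gradient ω (x + t • d))) (x + t • d) :=
        ((hω _).hasGradientAt).hasFDerivAt
      exact h1.comp_hasDerivAt t (hline t)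
    set h : ℝ → ℝ := fun t =>
      ω (x + t • d) - t * ⟪gradient ω x, d⟫ - η * t ^ 2 / 2 * N d ^ 2 with hhdef
    have hh : ∀ t : ℝ, HasDerivAt h
        (⟪gradient ω (x + t • d), d⟫ - ⟪gradient ω x, d⟫ - η * t * N d ^ 2) t := by
      intro t
      have h2 : HasDerivAt (fun t : ℝ => t * ⟪gradient ω x, d⟫) ⟪gradient ω x, d⟫ t := by
        simpa using (hasDerivAt_id t).mul_const ⟪gradient ω x, d⟫
      have h3 : HasDerivAt (fun t : ℝ => η * t ^ 2 / 2 * N d ^ 2) (η * t * N d ^ 2) t := by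
        have : HasDerivAt (fun t : ℝ => t ^ 2) (2 * t) t := by
          simpa using (hasDerivAt_pow 2 t)
        have := ((this.const_mul η).div_const 2).mul_const (N d ^ 2)
        convert this using 1
        · rfl
        · rfl
        · ring
      exact ((hg t).sub h2).sub h3
    have hderiv_nonneg : ∀ t ∈ Set.Ioo (0 : ℝ) 1, 0 ≤ deriv h t := by
      intro t ht
      rw [(hh t).deriv]
      have hxt : x + t • d ∈ X := hmemline t ⟨ht.1.le, ht.2.le⟩
      have hs := hstrong x hx (x + t • d) hxt
      have hsub : (x + t • d) - x = t • d := by abel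
      rw [hsub] at hs
      rw [hN_smul, abs_of_pos ht.1, real_inner_smul_right] at hs
      have hgrad : gradient ω (x + t • d) - gradient ω x = gradient ω (x + t • d) - gradient ω x := rfl
      have hinner : ⟪gradient ω (x + t • d) - gradient ω x, d⟫ =
          ⟪gradient ω (x + t • d), d⟫ - ⟪gradient ω x, d⟫ := by
        rw [inner_sub_left]
      have : η * (t * N d) ^ 2 ≤ t * (⟪gradient ω (x + t • d), d⟫ - ⟪gradient ω x, d⟫) := by
        rw [← hinner]; exact hs
      nlinarith [ht.1]
    have hmono : MonotoneOn h (Set.Icc (0 : ℝ) 1) := by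
      apply monotoneOn_of_deriv_nonneg (convex_Icc 0 1)
      · exact Continuous.continuousOn
          (continuous_iff_continuousAt.mpr fun t => (hh t).continuousAt)
      · intro t ht
        exact ((hh t).differentiableAt).differentiableWithinAt
      · intro t ht
        rw [interior_Icc] at ht
        exact hderiv_nonneg t ht
    have h01 : h 0 ≤ h 1 :=
      hmono (Set.mem_Icc.mpr ⟨le_refl 0, zero_le_one⟩) (Set.mem_Icc.mpr ⟨zero_le_one, le_refl 1⟩)
        zero_le_one
    rw [hhdef] at h01
    simp only [one_smul, zero_smul, add_zero] at h01
    have hxd : x + d = w := by rw [hd]; abel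
    rw [hxd] at h01
    rw [hV]
    have hwx : w - x = d := rfl
    rw [hwx]
    nlinarith [h01]
  -- variational inequality at each prox step
  intro u hu
  have hVI : ∀ s < S, ⟪ζ s + gradient ω (v (s + 1)) - gradient ω (v s), u - v (s + 1)⟫ ≥ 0 := by
    intro s hs
    set vp := v (s + 1) with hvp
    have hvpX : vp ∈ X := hvmem s hs
    set f : E → ℝ := fun w => ⟪ζ s, w - v s⟫ + V (v s) w with hfdef
    have hmin : IsLocalMinOn f X vp := by
      apply IsMinOn.localize
      rw [isMinOn_iff]
      intro w hw
      exact hprox s hs w hw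
    have hfderiv : HasFDerivAt f
        (innerSL ℝ (ζ s) + InnerProductSpace.toDual ℝ E (gradient ω vp)
          - innerSL ℝ (gradient ω (v s))) vp := by
      have h1 : HasFDerivAt (fun w : E => ⟪ζ s, w - v s⟫) (innerSL ℝ (ζ s)) vp := by
        have hbase : HasFDerivAt (fun w : E => ⟪ζ s, w⟫) (innerSL ℝ (ζ s)) vp :=
          (innerSL ℝ (ζ s)).hasFDerivAt
        have := hbase.sub_const ⟪ζ s, v s⟫
        convert this using 2 with w
        · rfl
        · rfl
        · rw [inner_sub_right]
      have h2 : HasFDerivAt ω (InnerProductSpace.toDual ℝ E (gradient ω vp)) vp :=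
        ((hω vp).hasGradientAt).hasFDerivAt
      have h3 : HasFDerivAt (fun w : E => ⟪gradient ω (v s), w - v s⟫)
          (innerSL ℝ (gradient ω (v s))) vp := by
        have hbase : HasFDerivAt (fun w : E => ⟪gradient ω (v s), w⟫)
            (innerSL ℝ (gradient ω (v s))) vp := (innerSL ℝ (gradient ω (v s))).hasFDerivAt
        have := hbase.sub_const ⟪gradient ω (v s), v s⟫
        convert this using 2 with w
        · rfl
        · rfl
        · rw [inner_sub_right]
      have hVform : HasFDerivAt (fun w => V (v s) w)
          (InnerProductSpace.toDual ℝ E (gradient ω vp) - innerSL ℝ (gradient ω (v s))) vp := by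
        have := (h2.sub_const (ω (v s))).sub h3
        have heq : (fun w => V (v s) w) = fun w => (ω w - ω (v s)) - ⟪gradient ω (v s), w - v s⟫ := by
          funext w
          rw [hV]
        rw [heq]
        exact this
      have h4 := h1.add hVform
      have hre : innerSL ℝ (ζ s) + InnerProductSpace.toDual ℝ E (gradient ω vp)
          - innerSL ℝ (gradient ω (v s)) = innerSL ℝ (ζ s) + (InnerProductSpace.toDual ℝ E (gradient ω vp)
          - innerSL ℝ (gradient ω (v s))) := add_sub_assoc _ _ _
      rw [hre]
      exact h4
    have hcone : u - vp ∈ posTangentConeAt X vp :=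
      sub_mem_posTangentConeAt_of_segment_subset (hXconv.segment_subset hvpX hu)
    have := hmin.hasFDerivWithinAt_nonneg hfderiv.hasFDerivWithinAt hcone
    have happ : (innerSL ℝ (ζ s) + InnerProductSpace.toDual ℝ E (gradient ω vp)
          - innerSL ℝ (gradient ω (v s))) (u - vp)
        = ⟪ζ s + gradient ω vp - gradient ω (v s), u - vp⟫ := by
      simp [inner_add_left, inner_sub_left, InnerProductSpace.toDual_apply_apply]
    rw [happ] at this
    exact this
  -- per-step bound
  have hstep : ∀ s < S, ⟪ζ s, v s - u⟫ ≤
      (V (v s) u - V (v (s + 1)) u) + Nstar (ζ s) ^ 2 / (2 * η) := by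
    intro s hs
    set vs := v s with hvs
    set vp := v (s + 1) with hvp
    have hvsX : vs ∈ X := by
      cases s with
      | zero => exact hv0
      | succ k => exact hvmem k (Nat.lt_of_succ_lt hs)
    have hvpX : vp ∈ X := hvmem s hs
    -- three point identity
    have h3pt : ⟪gradient ω vp - gradient ω vs, u - vp⟫ = V vs u - V vp u - V vs vp := by
      rw [hV, hV, hV]
      simp only [inner_sub_left, inner_sub_right]
      ring
    have hVIs := hVI s hs
    have hkey : ⟪ζ s, vp - u⟫ ≤ V vs u - V vp u - V vs vp := by
      have : ⟪ζ s + gradient ω vp - gradient ω vs, u - vp⟫ =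
          ⟪ζ s, u - vp⟫ + ⟪gradient ω vp - gradient ω vs, u - vp⟫ := by
        simp only [inner_add_left, inner_sub_left]
        ring
      rw [this, h3pt] at hVIs
      have hneg : ⟪ζ s, vp - u⟫ = -⟪ζ s, u - vp⟫ := by
        rw [← inner_neg_right]; congr 1; abel
      rw [hneg]
      linarith
    have hsplit : ⟪ζ s, vs - u⟫ = ⟪ζ s, vs - vp⟫ + ⟪ζ s, vp - u⟫ := by
      rw [← inner_add_right]; congr 1; abel
    have hbd1 : ⟪ζ s, vs - vp⟫ ≤ Nstar (ζ s) * N (vs - vp) := hdual _ _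
    have hNlb : η / 2 * N (vs - vp) ^ 2 ≤ V vs vp := by
      have := hVlb vs hvsX vp hvpX
      have hsym : N (vp - vs) = N (vs - vp) := by
        have := hN_smul (-1) (vs - vp)
        simp only [neg_smul, one_smul, abs_neg, abs_one, one_mul] at this
        rw [show -(vs - vp) = vp - vs by abel] at this
        rw [this]
      rwa [hsym] at this
    have hamgm : Nstar (ζ s) * N (vs - vp) - η / 2 * N (vs - vp) ^ 2 ≤
        Nstar (ζ s) ^ 2 / (2 * η) := by
      have hη' : (0:ℝ) < 2 * η := by linarith
      rw [le_div_iff₀ hη']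
      nlinarith [sq_nonneg (Nstar (ζ s) - η * N (vs - vp))]
    calc ⟪ζ s, vs - u⟫ = ⟪ζ s, vs - vp⟫ + ⟪ζ s, vp - u⟫ := hsplit
      _ ≤ Nstar (ζ s) * N (vs - vp) + (V vs u - V vp u - V vs vp) := by linarith
      _ ≤ Nstar (ζ s) * N (vs - vp) + (V vs u - V vp u - η / 2 * N (vs - vp) ^ 2) := by linarith
      _ ≤ (V vs u - V vp u) + Nstar (ζ s) ^ 2 / (2 * η) := by
          have := hamgm
          linarith
  -- sum up
  have hsum : ∑ s ∈ Finset.range S, ⟪ζ s, v s - u⟫ ≤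
      ∑ s ∈ Finset.range S, ((V (v s) u - V (v (s + 1)) u) + Nstar (ζ s) ^ 2 / (2 * η)) := by
    apply Finset.sum_le_sum
    intro s hs
    exact hstep s (Finset.mem_range.mp hs)
  have htele : ∑ s ∈ Finset.range S, (V (v s) u - V (v (s + 1)) u) = V (v 0) u - V (v S) u :=
    Finset.sum_range_sub' (fun s => V (v s) u) S
  have hVS : 0 ≤ V (v S) u := by
    have hvSX : v S ∈ X := by
      cases S with
      | zero => exact hv0
      | succ k => exact hvmem k (Nat.lt_succ_self k)
    have := hVlb (v S) hvSX u hu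
    nlinarith [hN_nonneg (u - v S), sq_nonneg (N (u - v S))]
  have hfinal : ∑ s ∈ Finset.range S, Nstar (ζ s) ^ 2 / (2 * η) =
      (1 / (2 * η)) * ∑ s ∈ Finset.range S, Nstar (ζ s) ^ 2 := by
    rw [Finset.mul_sum]
    apply Finset.sum_congr rfl
    intro s _
    ring
  rw [Finset.sum_add_distrib, htele, hfinal] at hsum
  linarith
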